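/- If g is a nearest-neighbor traversal of V under a symmetric cost function c satisfying the triangle inequality, with minimum pairwise cost m and maximum pairwise cost M, and o is a minimum-cost traversal of cost C, then the cost of g is at most C·(1 + ln(M/m)). -/

import Mathlib

open Finset


lemma harm_le_log (m : ℕ) (hm : 1 ≤ m) :
    ∀ K : ℕ, m ≤ K → ∑ t ∈ Finset.Icc (m + 1) K, (1 : ℝ) / t ≤ Real.log K - Real.log m := by
  intro K
  induction K with
  | zero => intro h; omega
  | succ K ih =>
    intro h
    rcases Nat.lt_or_ge m (K + 1) with h1 | h1
    · have hmK : m ≤ K := by omega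
      have h2 : Finset.Icc (m + 1) (K + 1) = insert (K + 1) (Finset.Icc (m + 1) K) := by
        rw [← Finset.insert_Icc_right_eq_Icc_add_one (by omega)]
      have hnot : (K + 1) ∉ Finset.Icc (m + 1) K := by simp
      rw [h2, Finset.sum_insert hnot]
      have hK1 : (1 : ℝ) ≤ (K : ℝ) := by exact_mod_cast Nat.one_le_iff_ne_zero.mpr (by omega)
      have hKpos : (0 : ℝ) < K := by linarith
      have hK1pos : (0 : ℝ) < (K : ℝ) + 1 := by linarith
      have hlog : (1 : ℝ) / (K + 1) ≤ Real.log (K + 1) - Real.log K := by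
        have := Real.log_le_sub_one_of_pos (x := (K : ℝ) / (K + 1)) (by positivity)
        rw [Real.log_div (by positivity) (by positivity)] at this
        have : Real.log K - Real.log (K + 1) ≤ (K : ℝ) / (K + 1) - 1 := this
        have heq : (K : ℝ) / (K + 1) - 1 = -(1 / (K + 1)) := by field_simp; ring
        linarith [this, heq ▸ this]
      have := ih hmK
      push_cast
      push_cast at this hlog
      linarith
    · have : m = K + 1 := by omega
      subst this
      simp


lemma path_tri {V : Type*} (c : V → V → ℕ) (htri : ∀ u v w : V, c u v ≤ c u w + c w v)
    (o : ℕ → V) (p : ℕ) : ∀ q, p < q → c (o p) (o q) ≤ ∑ i ∈ Finset.Ico p q, c (o i) (o (i + 1)) := by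
  intro q
  induction q with
  | zero => omega
  | succ q ih =>
    intro h
    rcases Nat.lt_or_ge p q with h1 | h1
    · rw [Finset.sum_Ico_succ_top (le_of_lt h1)]
      calc c (o p) (o (q + 1)) ≤ c (o p) (o q) + c (o q) (o (q + 1)) := htri _ _ _
        _ ≤ _ := by have := ih h1; omega
    · have : p = q := by omega
      subst this
      simp

lemma pathLB {V : Type*} (c : V → V → ℕ) (htri : ∀ u v w : V, c u v ≤ c u w + c w v)
    (o : ℕ → V) (t : ℕ) :
    ∀ (k : ℕ) (P : Finset ℕ) (hne : P.Nonempty), P.card = k →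
      (∀ p ∈ P, ∀ q ∈ P, p < q → t ≤ c (o p) (o q)) →
      (k - 1) * t ≤ ∑ i ∈ Finset.range (P.max' hne), c (o i) (o (i + 1)) := by
  intro k
  induction k with
  | zero => intro P hne hcard _; simp
  | succ k ih =>
    intro P hne hcard hpair
    rcases Nat.eq_zero_or_pos k with hk | hk
    · simp [hk]
    · set q := P.max' hne with hq
      have hqP : q ∈ P := P.max'_mem hne
      set P' := P.erase q with hP'
      have hcard' : P'.card = k := by
        simp [hP', Finset.card_erase_of_mem hqP, hcard]
      have hne' : P'.Nonempty := Finset.card_pos.mp (by omega)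
      set p := P'.max' hne' with hp
      have hpP' : p ∈ P' := P'.max'_mem hne'
      have hpP : p ∈ P := Finset.mem_of_mem_erase hpP'
      have hpq : p < q := by
        have h1 : p ≤ q := P.le_max' p hpP
        have h2 : p ≠ q := Finset.ne_of_mem_erase hpP'
        omega
      have hIH := ih P' hne' hcard' (fun a ha b hb hab =>
        hpair a (Finset.mem_of_mem_erase ha) b (Finset.mem_of_mem_erase hb) hab)
      have hsplit : Finset.range q = Finset.range p ∪ Finset.Ico p q := by
        rw [Finset.range_eq_Ico, Finset.range_eq_Ico, Finset.Ico_union_Ico_eq_Ico (Nat.zero_le p) (le_of_lt hpq)]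
      have hdisj : Disjoint (Finset.range p) (Finset.Ico p q) := by
        simp [Finset.disjoint_left]; omega
      have hseg : t ≤ ∑ i ∈ Finset.Ico p q, c (o i) (o (i + 1)) :=
        le_trans (hpair p hpP q hqP hpq) (path_tri c htri o p q hpq)
      rw [hsplit, Finset.sum_union hdisj]
      have heq : (k + 1 - 1) * t = (k - 1) * t + t := by
        have : k + 1 - 1 = (k - 1) + 1 := by omega
        rw [this, add_mul, one_mul]
      rw [heq]
      exact add_le_add hIH hseg


/-- `g` is a nearest-neighbor traversal for cost `c`. -/
def IsNNTraversal {V : Type*} [Fintype V] (n : ℕ) (c : V → V → ℕ) (g : ℕ → V) : Prop :=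
  Function.Bijective (fun i : Fin n => g i) ∧
    ∀ i : ℕ, i + 1 < n → ∀ x : V, (∀ t : ℕ, t ≤ i → g t ≠ x) →
      c (g i) (g (i + 1)) ≤ c (g i) x

/-- With `m` the minimum and `M` the maximum pairwise cost (`m ≥ 1`),
the cost of a nearest-neighbor traversal is at most `C * (1 + ln (M / m))` where `C` is
the minimum traversal cost (aspect-ratio bound). -/
theorem nn_approx_ratio_aspect
    {V : Type*} [Fintype V] (n : ℕ) (hn : n = Fintype.card V) (hn2 : 2 ≤ n)
    (c : V → V → ℕ) (hsymm : ∀ u v, c u v = c v u)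
    (htri : ∀ u v w : V, c u v ≤ c u w + c w v)
    (m M : ℕ) (hm1 : 1 ≤ m)
    (hm : ∀ u v : V, u ≠ v → m ≤ c u v) (hm' : ∃ u v : V, u ≠ v ∧ c u v = m)
    (hM : ∀ u v : V, u ≠ v → c u v ≤ M) (hM' : ∃ u v : V, u ≠ v ∧ c u v = M)
    (g : ℕ → V) (hg : IsNNTraversal n c g)
    (o : ℕ → V) (ho : Function.Bijective (fun i : Fin n => o i))
    (C : ℕ) (hC : C = ∑ t ∈ Finset.range (n - 1), c (o t) (o (t + 1)))
    (hopt : ∀ o' : ℕ → V, Function.Bijective (fun i : Fin n => o' i) →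
      C ≤ ∑ t ∈ Finset.range (n - 1), c (o' t) (o' (t + 1))) :
    ((∑ i ∈ Finset.range (n - 1), c (g i) (g (i + 1)) : ℕ) : ℝ) ≤
      (C : ℝ) * (1 + Real.log ((M : ℝ) / (m : ℝ))) := by
  classical
  obtain ⟨hgbij, hnn⟩ := hg
  have hgne : ∀ i j : ℕ, i < n → j < n → i ≠ j → g i ≠ g j := by
    intro i j hi hj hij h
    have := hgbij.1 (a₁ := ⟨i, hi⟩) (a₂ := ⟨j, hj⟩) h
    simp only [Fin.mk.injEq] at this
    omega
  have hone : ∀ i j : ℕ, i < n → j < n → i ≠ j → o i ≠ o j := by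
    intro i j hi hj hij h
    have := ho.1 (a₁ := ⟨i, hi⟩) (a₂ := ⟨j, hj⟩) h
    simp only [Fin.mk.injEq] at this
    omega
  -- key counting lemma
  have key : ∀ t : ℕ, 1 ≤ t →
      ((Finset.range (n - 1)).filter (fun i => t ≤ c (g i) (g (i + 1)))).card * t ≤ C := by
    intro t ht
    set S := (Finset.range (n - 1)).filter (fun i => t ≤ c (g i) (g (i + 1))) with hSdef
    rcases S.eq_empty_or_nonempty with hSe | hSne
    · simp [hSe]
    · set i0 := S.max' hSne with hi0
      have hi0S : i0 ∈ S := S.max'_mem hSne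
      have hSsubn : ∀ i ∈ S, i < n - 1 := fun i hi =>
        Finset.mem_range.mp (Finset.mem_filter.mp hi).1
      have hi0lt : i0 < n - 1 := hSsubn i0 hi0S
      have claim1 : ∀ i ∈ S, ∀ j, i < j → j < n → t ≤ c (g i) (g j) := by
        intro i hiS j hij hj
        obtain ⟨hir, hit⟩ := Finset.mem_filter.mp hiS
        have hin : i < n - 1 := Finset.mem_range.mp hir
        have hnn' := hnn i (by omega) (g j) (fun s hs => hgne s j (by omega) hj (by omega))
        omega
      set W := insert (g (i0 + 1)) (S.image g) with hW
      have hWcard : W.card = S.card + 1 := by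
        rw [hW, Finset.card_insert_of_notMem, Finset.card_image_of_injOn]
        · intro a ha b hb hab
          by_contra hne2
          exact hgne a b (by have := hSsubn a ha; omega) (by have := hSsubn b hb; omega)
            hne2 hab
        · intro hmem
          obtain ⟨a, ha, hga⟩ := Finset.mem_image.mp hmem
          have h1 : a < n - 1 := hSsubn a ha
          have hle : a ≤ i0 := S.le_max' a ha
          exact hgne a (i0 + 1) (by omega) (by omega) (by omega) hga
      have claim2 : ∀ u ∈ W, ∀ v ∈ W, u ≠ v → t ≤ c u v := by
        intro u hu v hv huv
        rw [hW] at hu hv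
        rcases Finset.mem_insert.mp hu with hu' | hu' <;>
          rcases Finset.mem_insert.mp hv with hv' | hv'
        · exact absurd (hu'.trans hv'.symm) huv
        · obtain ⟨j, hjS, hgj⟩ := Finset.mem_image.mp hv'
          subst hu'; subst hgj
          rw [hsymm]
          exact claim1 j hjS (i0 + 1) (by have := S.le_max' j hjS; omega) (by omega)
        · obtain ⟨j, hjS, hgj⟩ := Finset.mem_image.mp hu'
          subst hv'; subst hgj
          exact claim1 j hjS (i0 + 1) (by have := S.le_max' j hjS; omega) (by omega)
        · obtain ⟨a, haS, hga⟩ := Finset.mem_image.mp hu'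
          obtain ⟨b, hbS, hgb⟩ := Finset.mem_image.mp hv'
          subst hga; subst hgb
          have hab : a ≠ b := fun h => huv (by rw [h])
          rcases Nat.lt_or_ge a b with h1 | h1
          · exact claim1 a haS b h1 (by have := hSsubn b hbS; omega)
          · rw [hsymm]
            exact claim1 b hbS a (by omega) (by have := hSsubn a haS; omega)
      set P := (Finset.range n).filter (fun p => o p ∈ W) with hPdef
      have hPcard : P.card = W.card := by
        apply Finset.card_bij (fun p _ => o p)
        · intro p hp; exact (Finset.mem_filter.mp hp).2
        · intro p hp q hq hpq
          by_contra hne2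
          exact hone p q (Finset.mem_range.mp (Finset.mem_filter.mp hp).1)
            (Finset.mem_range.mp (Finset.mem_filter.mp hq).1) hne2 hpq
        · intro w hw
          obtain ⟨i, hi⟩ := ho.2 w
          exact ⟨i.1, Finset.mem_filter.mpr ⟨Finset.mem_range.mpr i.2, by
            simp only at hi; rw [hi]; exact hw⟩, by simp only at hi; exact hi⟩
      have hPne : P.Nonempty := by
        rw [← Finset.card_pos, hPcard, hWcard]; omega
      have hPpair : ∀ p ∈ P, ∀ q ∈ P, p < q → t ≤ c (o p) (o q) := by
        intro p hp q hq hpq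
        apply claim2 _ (Finset.mem_filter.mp hp).2 _ (Finset.mem_filter.mp hq).2
        exact hone p q (Finset.mem_range.mp (Finset.mem_filter.mp hp).1)
          (Finset.mem_range.mp (Finset.mem_filter.mp hq).1) (by omega)
      have hmax : P.max' hPne ≤ n - 1 := by
        have h1 := P.max'_mem hPne
        have h2 := Finset.mem_range.mp (Finset.mem_filter.mp h1).1
        omega
      have hLB := pathLB c htri o t P.card P hPne rfl hPpair
      calc S.card * t = (P.card - 1) * t := by rw [hPcard, hWcard]; congr 1
        _ ≤ ∑ i ∈ Finset.range (P.max' hPne), c (o i) (o (i + 1)) := hLB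
        _ ≤ ∑ i ∈ Finset.range (n - 1), c (o i) (o (i + 1)) :=
            Finset.sum_le_sum_of_subset (Finset.range_subset_range.mpr hmax)
        _ = C := hC.symm
  -- basic edge bounds
  have hd_m : ∀ i ∈ Finset.range (n - 1), m ≤ c (g i) (g (i + 1)) := by
    intro i hi
    have hi' := Finset.mem_range.mp hi
    exact hm _ _ (hgne i (i + 1) (by omega) (by omega) (by omega))
  have hd_M : ∀ i ∈ Finset.range (n - 1), c (g i) (g (i + 1)) ≤ M := by
    intro i hi
    have hi' := Finset.mem_range.mp hi
    exact hM _ _ (hgne i (i + 1) (by omega) (by omega) (by omega))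
  have hmM : m ≤ M := by
    obtain ⟨u, v, huv, hcm⟩ := hm'
    calc m = c u v := hcm.symm
      _ ≤ M := hM u v huv
  have hCm : (n - 1) * m ≤ C := by
    rw [hC]
    calc (n - 1) * m = ∑ _i ∈ Finset.range (n - 1), m := by
          rw [Finset.sum_const, smul_eq_mul, Finset.card_range, mul_comm]
      _ ≤ _ := Finset.sum_le_sum (fun i hi => by
          have hi' := Finset.mem_range.mp hi
          exact hm _ _ (hone i (i + 1) (by omega) (by omega) (by omega)))
  -- discrete layer-cake identity
  have hsum : ∑ i ∈ Finset.range (n - 1), c (g i) (g (i + 1))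
      = (n - 1) * m + ∑ t ∈ Finset.Icc (m + 1) M,
          ((Finset.range (n - 1)).filter (fun i => t ≤ c (g i) (g (i + 1)))).card := by
    have h1 : ∀ i ∈ Finset.range (n - 1), c (g i) (g (i + 1))
        = m + ((Finset.Icc (m + 1) M).filter (fun t => t ≤ c (g i) (g (i + 1)))).card := by
      intro i hi
      have hdm := hd_m i hi
      have hdM := hd_M i hi
      have heq : (Finset.Icc (m + 1) M).filter (fun t => t ≤ c (g i) (g (i + 1)))
          = Finset.Icc (m + 1) (c (g i) (g (i + 1))) := by
        ext s
        simp only [Finset.mem_filter, Finset.mem_Icc]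
        omega
      rw [heq, Nat.card_Icc]
      omega
    rw [Finset.sum_congr rfl h1, Finset.sum_add_distrib, Finset.sum_const, Finset.card_range,
      smul_eq_mul, mul_comm]
    congr 1
    have h2 : ∀ i ∈ Finset.range (n - 1),
        ((Finset.Icc (m + 1) M).filter (fun t => t ≤ c (g i) (g (i + 1)))).card
        = ∑ t ∈ Finset.Icc (m + 1) M, if t ≤ c (g i) (g (i + 1)) then 1 else 0 := by
      intro i _
      rw [Finset.card_filter]
    rw [Finset.sum_congr rfl h2, Finset.sum_comm]
    exact Finset.sum_congr rfl (fun t _ => (Finset.card_filter _ _).symm)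
  -- move to the reals
  have hmpos : (0 : ℝ) < m := by exact_mod_cast hm1
  have hMpos : (0 : ℝ) < M := by
    have : (1 : ℕ) ≤ M := le_trans hm1 hmM
    exact_mod_cast lt_of_lt_of_le one_pos (by exact_mod_cast this)
  have hkeyR : ∀ t ∈ Finset.Icc (m + 1) M,
      (((Finset.range (n - 1)).filter (fun i => t ≤ c (g i) (g (i + 1)))).card : ℝ)
        ≤ (C : ℝ) * (1 / t) := by
    intro t htmem
    have ht := (Finset.mem_Icc.mp htmem).1
    have hkey := key t (by omega)
    have htpos : (0 : ℝ) < t := by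
      have : (1 : ℕ) ≤ t := by omega
      exact_mod_cast lt_of_lt_of_le one_pos (by exact_mod_cast this)
    rw [mul_one_div, le_div_iff₀ htpos]
    exact_mod_cast hkey
  have hharm : ∑ t ∈ Finset.Icc (m + 1) M, (1 : ℝ) / t ≤ Real.log M - Real.log m :=
    harm_le_log m hm1 M hmM
  have hlogdiv : Real.log ((M : ℝ) / m) = Real.log M - Real.log m :=
    Real.log_div (ne_of_gt hMpos) (ne_of_gt hmpos)
  calc ((∑ i ∈ Finset.range (n - 1), c (g i) (g (i + 1)) : ℕ) : ℝ)
      = ((n - 1) * m : ℕ) + ∑ t ∈ Finset.Icc (m + 1) M,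
          (((Finset.range (n - 1)).filter (fun i => t ≤ c (g i) (g (i + 1)))).card : ℝ) := by
        rw [hsum]; push_cast; ring
    _ ≤ (C : ℝ) + ∑ t ∈ Finset.Icc (m + 1) M, (C : ℝ) * (1 / t) := by
        apply add_le_add
        · exact_mod_cast hCm
        · exact Finset.sum_le_sum hkeyR
    _ = (C : ℝ) + (C : ℝ) * ∑ t ∈ Finset.Icc (m + 1) M, (1 : ℝ) / t := by
        rw [Finset.mul_sum]
    _ ≤ (C : ℝ) + (C : ℝ) * (Real.log M - Real.log m) := by
        apply add_le_add_right
        exact mul_le_mul_of_nonneg_left hharm (by positivity)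
    _ = (C : ℝ) * (1 + Real.log ((M : ℝ) / m)) := by
        rw [hlogdiv]; ring
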